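/- Let I ⊆ ℝ be an open interval, V : ℝ → ℝ a function, and ε a real constant. Let w : ℝ → ℝ be differentiable on I with w'(x) + w(x)^2 = V(x) - ε on I. Let γ : ℝ → ℝ be twice differentiable on I with γ(x) ≠ 0 for all x ∈ I, and let v : ℝ → ℝ be differentiable on I with v'(x) + v(x)^2 = V(x) + 1/γ(x)^2 - ε on I, such that w(x) - v(x) ≠ 0 for all x ∈ I. Then the function w̄(x) = -v(x) - (1/γ(x)^2)/(w(x) - v(x)) + γ'(x)/γ(x) is differentiable on I and satisfies w̄'(x) + w̄(x)^2 = V(x) - 2·((γ'(x)/γ(x))·v(x) + v'(x)) + γ''(x)/γ(x) - ε for all x ∈ I. -/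

import Mathlib

/-- **Generalized finite difference transformation (Theorem 2 of the paper).**
If `w` solves `w' + w² = V - ε` on an open interval `I`, `γ` is twice
differentiable and never vanishing on `I`, and `v` solves
`v' + v² = V + 1/γ² - ε` on `I` with `w - v` never vanishing, then
`w̄ = -v - (1/γ²)/(w - v) + γ'/γ` is differentiable on `I` and solves
`w̄' + w̄² = V - 2((γ'/γ)v + v') + γ''/γ - ε` on `I`. -/
theorem generalized_finite_difference
    (I : Set ℝ) (hI : IsOpen I) (hIint : I.OrdConnected)
    (V : ℝ → ℝ) (ε : ℝ)
    (w w' v v' γ γ' γ'' : ℝ → ℝ)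
    (hw : ∀ x ∈ I, HasDerivAt w (w' x) x)
    (hv : ∀ x ∈ I, HasDerivAt v (v' x) x)
    (hγ : ∀ x ∈ I, HasDerivAt γ (γ' x) x)
    (hγ' : ∀ x ∈ I, HasDerivAt γ' (γ'' x) x)
    (hγ0 : ∀ x ∈ I, γ x ≠ 0)
    (hRw : ∀ x ∈ I, w' x + (w x) ^ 2 = V x - ε)
    (hRv : ∀ x ∈ I, v' x + (v x) ^ 2 = V x + 1 / (γ x) ^ 2 - ε)
    (hne : ∀ x ∈ I, w x - v x ≠ 0) :
    ∀ x ∈ I,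
      HasDerivAt
        (fun y => -v y - (1 / (γ y) ^ 2) / (w y - v y) + γ' y / γ y)
        ((V x - 2 * ((γ' x / γ x) * v x + v' x) + γ'' x / γ x - ε)
          - (-v x - (1 / (γ x) ^ 2) / (w x - v x) + γ' x / γ x) ^ 2) x := by
  intro x hx
  have hg0 := hγ0 x hx
  have hwv := hne x hx
  have hg2 : (γ x) ^ 2 ≠ 0 := pow_ne_zero 2 hg0
  have hnum : HasDerivAt (fun y => 1 / (γ y) ^ 2)
      (-(2 * γ x ^ 1 * γ' x) / ((γ x) ^ 2) ^ 2) x := by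
    simpa [Pi.div_def, Pi.pow_def] using (hasDerivAt_const x (1:ℝ)).div ((hγ x hx).pow 2) hg2
  have hsub : HasDerivAt (fun y => w y - v y) (w' x - v' x) x :=
    (hw x hx).sub (hv x hx)
  have hfrac : HasDerivAt (fun y => (1 / (γ y) ^ 2) / (w y - v y))
      ((-(2 * γ x ^ 1 * γ' x) / ((γ x) ^ 2) ^ 2 * (w x - v x)
          - (1 / (γ x) ^ 2) * (w' x - v' x)) / (w x - v x) ^ 2) x :=
    hnum.div hsub hwv
  have hlast : HasDerivAt (fun y => γ' y / γ y)
      ((γ'' x * γ x - γ' x * γ' x) / (γ x) ^ 2) x :=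
    (hγ' x hx).div (hγ x hx) hg0
  have hmain := (((hv x hx).neg).sub hfrac).add hlast
  convert hmain using 1
  · rfl
  · rfl
  · rfl
  have ew : w' x = V x - ε - (w x) ^ 2 := by linarith [hRw x hx]
  have ev : v' x = V x + 1 / (γ x) ^ 2 - ε - (v x) ^ 2 := by linarith [hRv x hx]
  rw [ew, ev]
  field_simp
  ring
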